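/- Let Σ₀, Σ₁, Σ' be three sets in ℝⁿ that are pairwise-disjoint open n-simplices, whose closures satisfy (Σ₀)_c ∩ (Σ₁)_c = (Σ₀)_c ∩ (Σ')_c = (Σ₁)_c ∩ (Σ')_c = F for a common nonempty (n-1)-dimensional face F, with F ⊆ ∂Σ₀ ∩ ∂Σ₁ ∩ ∂Σ'. Suppose further that int((Σ')_c) ∩ int((Σ₀)_c ∪ (Σ₁)_c) = ∅ and the closure of int((Σ₀)_c ∪ (Σ₁)_c) contains F in its interior. Then (Σ')_c ∩ ((Σ₀)_c ∪ (Σ₁)_c) = ∅, contradicting F ≠ ∅; hence no such Σ' exists. -/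

import Mathlib

/-- An open n-simplex: a closed n-simplex minus the facet opposite a designated vertex. -/
def IsOpenSimplex {n : ℕ} (S : Set (Fin n → ℝ)) : Prop :=
  ∃ P : Fin (n + 1) → (Fin n → ℝ), AffineIndependent ℝ P ∧
    ∃ a : Fin (n + 1),
      S = convexHull ℝ (Set.range P) \ convexHull ℝ (P '' {i | i ≠ a})

/-- The closure of an open simplex is contained in the closure of its interior,
via convexity: every point of the closed simplex is a limit of interior points. -/
lemma openSimplex_closure_subset {n : ℕ} {S : Set (Fin n → ℝ)} (hS : IsOpenSimplex S) :
    closure S ⊆ closure (interior (closure S)) := by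
  obtain ⟨P, hP, a, rfl⟩ := hS
  set C : Set (Fin n → ℝ) := convexHull ℝ (Set.range P) with hC
  set D : Set (Fin n → ℝ) := convexHull ℝ (P '' {i | i ≠ a}) with hD
  have hspan : affineSpan ℝ (Set.range P) = ⊤ := by
    rw [hP.affineSpan_eq_top_iff_card_eq_finrank_add_one]
    simp [Module.finrank_fin_fun]
  -- affine basis
  let b : AffineBasis (Fin (n + 1)) ℝ (Fin n → ℝ) := ⟨P, hP, hspan⟩
  have hbP : ⇑b = P := rfl
  -- interior of C consists of points with all barycentric coordinates positive
  have hintC : interior C = {x | ∀ i, 0 < b.coord i x} := by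
    rw [hC, ← hbP]; exact b.interior_convexHull
  -- D is contained in the hyperplane where coordinate a vanishes
  have hDsub : D ⊆ {x | b.coord a x = 0} := by
    rw [hD]
    apply convexHull_min
    · rintro _ ⟨j, hj, rfl⟩
      have := b.coord_apply a j
      rw [hbP] at this
      simpa [if_neg (Ne.symm hj)] using this
    · intro x hx y hy s t hs ht hst
      have : b.coord a (s • x + t • y) = s * b.coord a x + t * b.coord a y := by
        have := (b.coord a).map_vadd
        simp [Convex.combo_affine_apply hst]
      simp only [Set.mem_setOf_eq] at hx hy ⊢
      rw [this, hx, hy]; ring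
  -- hence the interior of C avoids D
  have hintCD : interior C ⊆ C \ D := by
    intro x hx
    refine ⟨interior_subset hx, fun hxD => ?_⟩
    rw [hintC] at hx
    exact absurd (hDsub hxD) (ne_of_gt (hx a))
  -- interior of C is nonempty
  have hne : (interior C).Nonempty := by
    rw [hC]
    exact interior_convexHull_nonempty_iff_affineSpan_eq_top.2 hspan
  -- C is convex and closed
  have hCconv : Convex ℝ C := convex_convexHull ℝ _
  have hCclosed : IsClosed C := (Set.finite_range P).isClosed_convexHull (𝕜 := ℝ)
  -- closure (C \ D) ⊆ C
  have hclS : closure (C \ D) ⊆ C := by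
    refine closure_minimal Set.diff_subset hCclosed
  -- interior C ⊆ interior (closure (C \ D))
  have hintsub : interior C ⊆ interior (closure (C \ D)) :=
    interior_maximal (hintCD.trans subset_closure) isOpen_interior
  -- every point of C is in closure (interior C)
  intro x hx
  obtain ⟨y, hy⟩ := hne
  have hxC : x ∈ C := hclS hx
  have hseg : openSegment ℝ y x ⊆ interior C :=
    hCconv.openSegment_interior_self_subset_interior hy hxC
  have hxcl : x ∈ closure (openSegment ℝ y x) :=
    segment_subset_closure_openSegment (right_mem_segment ℝ y x)
  exact closure_mono (hseg.trans hintsub) hxcl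

/-- three pairwise disjoint open n-simplices in ℝⁿ cannot pairwise share
the same nonempty (n-1)-dimensional face F of their closures while the closures of the
first two cover a neighborhood of F: no such Σ' exists. -/
theorem stmt_14 {n : ℕ} (S₀ S₁ S' F : Set (Fin n → ℝ))
    (hS₀ : IsOpenSimplex S₀) (hS₁ : IsOpenSimplex S₁) (hS' : IsOpenSimplex S')
    (hd01 : S₀ ∩ S₁ = ∅) (hd0' : S₀ ∩ S' = ∅) (hd1' : S₁ ∩ S' = ∅)
    (hF01 : closure S₀ ∩ closure S₁ = F)
    (hF0' : closure S₀ ∩ closure S' = F)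
    (hF1' : closure S₁ ∩ closure S' = F)
    (hFne : F.Nonempty)
    (hFbd : F ⊆ frontier S₀ ∩ frontier S₁ ∩ frontier S')
    (hint : interior (closure S') ∩ interior (closure S₀ ∪ closure S₁) = ∅)
    (hFint : F ⊆ interior (closure (interior (closure S₀ ∪ closure S₁)))) :
    False := by
  obtain ⟨x, hxF⟩ := hFne
  set U : Set (Fin n → ℝ) := closure S₀ ∪ closure S₁ with hU
  -- x lies in the closure of S'
  have hxS' : x ∈ closure S' := by
    rw [← hF0'] at hxF; exact hxF.2
  -- x lies in the closure of the interior of closure S'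
  have hxcl : x ∈ closure (interior (closure S')) :=
    openSimplex_closure_subset hS' hxS'
  -- the open set V around x contained in closure (interior U)
  set V : Set (Fin n → ℝ) := interior (closure (interior U)) with hV
  have hxV : x ∈ V := hFint hxF
  -- V meets interior (closure S')
  have h1 : (V ∩ interior (closure S')).Nonempty := by
    rcases mem_closure_iff.1 hxcl V isOpen_interior hxV with ⟨z, hz⟩
    exact ⟨z, hz⟩
  obtain ⟨z, hzV, hzint⟩ := h1
  -- the open set V ∩ interior (closure S') is contained in closure (interior U),
  -- hence meets interior U
  have hzclU : z ∈ closure (interior U) := interior_subset hzV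
  have h2 : ((V ∩ interior (closure S')) ∩ interior U).Nonempty := by
    rcases mem_closure_iff.1 hzclU (V ∩ interior (closure S'))
      (isOpen_interior.inter isOpen_interior) ⟨hzV, hzint⟩ with ⟨w, hw⟩
    exact ⟨w, hw⟩
  obtain ⟨w, hw1, hw2⟩ := h2
  have : w ∈ interior (closure S') ∩ interior U := ⟨hw1.2, hw2⟩
  rw [hint] at this
  exact this
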